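/- Let F be a field, x = ξ + ξ⁻¹ for some nonzero ξ ∈ F, κ = x^2/(x^2−4) when x^2 ≠ 4, and t ∈ F nonzero. Then the triple (x, t + κ/t, t*ξ + κ/(t*ξ)) satisfies the Markoff equation translated appropriately: x^2 + y^2 + z^2 − x*y*z = 0 where y = t + κ/t and z = t*ξ + κ/(t*ξ). -/

import Mathlib

theorem markoff_param_solution {F : Type*} [Field F]
    (ξ t : F) (hξ : ξ ≠ 0) (ht : t ≠ 0)
    (x : F) (hx : x = ξ + ξ⁻¹) (hx4 : x ^ 2 ≠ 4)
    (κ : F) (hκ : κ = x ^ 2 / (x ^ 2 - 4)) :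
    x ^ 2 + (t + κ / t) ^ 2 + (t * ξ + κ / (t * ξ)) ^ 2
      - x * (t + κ / t) * (t * ξ + κ / (t * ξ)) = 0 := by
  have h1 : ξ ^ 2 - 1 ≠ 0 := by
    intro h
    apply hx4
    have hξ2 : ξ ^ 2 = 1 := by linear_combination h
    have hinv : ξ = ξ⁻¹ := eq_inv_of_mul_eq_one_left (by linear_combination hξ2)
    calc x ^ 2 = (ξ + ξ⁻¹) ^ 2 := by rw [hx]
      _ = (2 * ξ) ^ 2 := by rw [← hinv]; ring
      _ = 4 := by linear_combination (4 : F) * hξ2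
  have hx2 : x = (ξ ^ 2 + 1) / ξ := by
    rw [hx, eq_div_iff hξ, add_mul, inv_mul_cancel₀ hξ]; ring
  have hκ' : κ = ((ξ ^ 2 + 1) / (ξ ^ 2 - 1)) ^ 2 := by
    rw [hκ, show ((ξ ^ 2 + 1) / (ξ ^ 2 - 1)) ^ 2 = (ξ ^ 2 + 1) ^ 2 / (ξ ^ 2 - 1) ^ 2 from div_pow _ _ 2, div_eq_div_iff (sub_ne_zero.mpr hx4) (pow_ne_zero 2 h1), hx2]
    field_simp
    ring
  have hy : t + κ / t = (t ^ 2 * (ξ ^ 2 - 1) ^ 2 + (ξ ^ 2 + 1) ^ 2) / (t * (ξ ^ 2 - 1) ^ 2) := by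
    rw [hκ']; field_simp
  have hz : t * ξ + κ / (t * ξ)
      = (t ^ 2 * ξ ^ 2 * (ξ ^ 2 - 1) ^ 2 + (ξ ^ 2 + 1) ^ 2) / (t * ξ * (ξ ^ 2 - 1) ^ 2) := by
    rw [hκ']; field_simp
  rw [hx2, hy, hz, sub_eq_zero]
  field_simp
  ring
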